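/- Let Z ~ N(μ, Σ) be a D-dimensional Gaussian vector with σ_i² = Σ_{ii} > 0 for all i, let S = Σ_{i=1}^D sign(Z_i) and T = Σ_{j=1}^D d_j Z_j for fixed real coefficients d_j. Then Cov(S, T) = Σ_{i,j} a_i Σ_{ij} d_j, where a_i = 2φ(μ_i/σ_i)/σ_i. -/

import Mathlib

open MeasureTheory ProbabilityTheory Real
open scoped NNReal ENNReal

/-- Standard normal density `φ(t) = (2π)^{-1/2} e^{-t²/2}`. -/
noncomputable def stdNormalPDF (t : ℝ) : ℝ :=
  (Real.sqrt (2 * Real.pi))⁻¹ * Real.exp (-t ^ 2 / 2)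

namespace SteinAux


/-- centered normal density with variance `v`. -/
noncomputable def nd (v b : ℝ) : ℝ := (Real.sqrt (2 * Real.pi * v))⁻¹ * Real.exp (-b ^ 2 / (2 * v))

lemma nd_eq (v : ℝ) (hv : 0 < v) (b : ℝ) :
    nd v b = stdNormalPDF (b / Real.sqrt v) / Real.sqrt v := by
  have hs : (0:ℝ) < Real.sqrt v := Real.sqrt_pos.2 hv
  rw [nd, stdNormalPDF]
  rw [div_pow, Real.sq_sqrt hv.le, Real.sqrt_mul (by positivity) v]
  field_simp

lemma measurable_sign : Measurable Real.sign := by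
  have : Real.sign = fun x : ℝ => if x < 0 then (-1:ℝ) else if 0 < x then 1 else 0 := by
    funext x; rw [Real.sign]
  rw [this]
  exact Measurable.ite measurableSet_Iio measurable_const
    (Measurable.ite measurableSet_Ioi measurable_const measurable_const)

lemma abs_sign_le (x : ℝ) : |Real.sign x| ≤ 1 := by
  rcases lt_trichotomy x 0 with h | h | h
  · rw [Real.sign_of_neg h]; norm_num
  · simp [h, Real.sign_zero]
  · rw [Real.sign_of_pos h]; norm_num

lemma stdNormalPDF_nonneg (t : ℝ) : 0 ≤ stdNormalPDF t := by
  unfold stdNormalPDF; positivity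

lemma stdNormalPDF_even (t : ℝ) : stdNormalPDF (-t) = stdNormalPDF t := by
  simp [stdNormalPDF]

lemma continuous_stdNormalPDF : Continuous stdNormalPDF := by
  unfold stdNormalPDF
  exact continuous_const.mul ((continuous_pow 2).neg.div_const 2 |>.rexp)

lemma stdNormalPDF_eq_gaussianPDFReal : stdNormalPDF = gaussianPDFReal 0 1 := by
  funext x
  rw [stdNormalPDF, gaussianPDFReal]
  norm_num

/-- transfer integral against `gaussianReal 0 1` to Lebesgue. -/
lemma integral_gaussianReal_eq (f : ℝ → ℝ) :
    ∫ t, f t ∂(gaussianReal 0 1) = ∫ t, f t * stdNormalPDF t := by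
  rw [gaussianReal_of_var_ne_zero 0 one_ne_zero]
  have h : ∀ x, gaussianPDF 0 1 x = ((Real.toNNReal (gaussianPDFReal 0 1 x) : ℝ≥0) : ℝ≥0∞) := by
    intro x; rfl
  simp_rw [gaussianPDF_def]
  rw [show (fun x => ENNReal.ofReal (gaussianPDFReal 0 1 x))
      = (fun x => ((Real.toNNReal (gaussianPDFReal 0 1 x) : ℝ≥0) : ℝ≥0∞)) from rfl]
  rw [integral_withDensity_eq_integral_smul
    ((measurable_gaussianPDFReal 0 1).real_toNNReal) f]
  congr 1
  funext x
  rw [NNReal.smul_def, smul_eq_mul, Real.coe_toNNReal _ (gaussianPDFReal_nonneg 0 1 x),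
    stdNormalPDF_eq_gaussianPDFReal, mul_comm]

lemma hasDerivAt_neg_pdf (t : ℝ) :
    HasDerivAt (fun u => -stdNormalPDF u) (t * stdNormalPDF t) t := by
  unfold stdNormalPDF
  have h1 : HasDerivAt (fun u : ℝ => -u ^ 2 / 2) (-t) t := by
    have := ((hasDerivAt_pow 2 t).neg).div_const 2
    simpa using this.congr_deriv (by ring)
  have h2 := (h1.exp).const_mul (Real.sqrt (2 * Real.pi))⁻¹
  have := h2.neg
  exact this.congr_deriv (by ring)

lemma integrable_mul_pdf : Integrable (fun t => t * stdNormalPDF t) := by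
  unfold stdNormalPDF
  have := (integrable_mul_exp_neg_mul_sq (b := (1:ℝ)/2) (by norm_num)).const_mul
    (Real.sqrt (2 * Real.pi))⁻¹
  convert this using 2 with t
  ring_nf

lemma tendsto_pdf_atTop : Filter.Tendsto stdNormalPDF Filter.atTop (nhds 0) := by
  unfold stdNormalPDF
  rw [show (0:ℝ) = (Real.sqrt (2 * Real.pi))⁻¹ * 0 by ring]
  refine Filter.Tendsto.const_mul _ ?_
  refine Real.tendsto_exp_atBot.comp ?_
  have h : Filter.Tendsto (fun t : ℝ => t ^ 2 / 2) Filter.atTop Filter.atTop :=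
    (Filter.tendsto_pow_atTop two_ne_zero).atTop_div_const (by norm_num)
  have := Filter.tendsto_neg_atTop_atBot.comp h
  simpa [Function.comp_def, neg_div] using this

lemma tendsto_pdf_atBot : Filter.Tendsto stdNormalPDF Filter.atBot (nhds 0) := by
  have := tendsto_pdf_atTop.comp (Filter.tendsto_neg_atBot_atTop (G := ℝ))
  simpa [Function.comp_def, stdNormalPDF_even] using this

lemma integral_Ioi_mul_pdf (c : ℝ) : ∫ t in Set.Ioi c, t * stdNormalPDF t = stdNormalPDF c := by
  have h := integral_Ioi_of_hasDerivAt_of_tendsto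
    (f := fun u => -stdNormalPDF u) (f' := fun t => t * stdNormalPDF t) (a := c) (m := 0)
    (continuous_stdNormalPDF.neg.continuousWithinAt)
    (fun x _ => hasDerivAt_neg_pdf x)
    (integrable_mul_pdf.integrableOn)
    (by simpa using tendsto_pdf_atTop.neg)
  simpa using h

lemma integral_Iic_mul_pdf (c : ℝ) : ∫ t in Set.Iic c, t * stdNormalPDF t = -stdNormalPDF c := by
  have h := integral_Iic_of_hasDerivAt_of_tendsto
    (f := fun u => -stdNormalPDF u) (f' := fun t => t * stdNormalPDF t) (a := c) (m := 0)
    (continuous_stdNormalPDF.neg.continuousWithinAt)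
    (fun x _ => hasDerivAt_neg_pdf x)
    (integrable_mul_pdf.integrableOn)
    (by simpa using tendsto_pdf_atBot.neg)
  simpa using h

lemma integral_id_gaussian : ∫ t, t ∂(gaussianReal 0 1) = 0 := by
  rw [integral_gaussianReal_eq]
  rw [← intervalIntegral.integral_Iic_add_Ioi (b := (0:ℝ)) integrable_mul_pdf.integrableOn
    integrable_mul_pdf.integrableOn]
  rw [integral_Iic_mul_pdf, integral_Ioi_mul_pdf]
  ring


lemma nd_abs (c b : ℝ) (hc : c ≠ 0) : nd (c ^ 2) b = stdNormalPDF (b / c) / |c| := by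
  have hE : -(b / c) ^ 2 / 2 = -b ^ 2 / (2 * c ^ 2) := by
    field_simp
  rw [nd, stdNormalPDF, hE]
  rw [Real.sqrt_mul (by positivity) (c ^ 2), Real.sqrt_sq_eq_abs, mul_inv]
  ring

/-- Key 1-d integral: `∫ sign(b + c t) t dγ(t) = 2 c nd(c²) b`. -/
lemma integral_sign_mul (b c : ℝ) :
    ∫ t, Real.sign (b + c * t) * t ∂(gaussianReal 0 1) = 2 * c * nd (c ^ 2) b := by
  rcases eq_or_ne c 0 with hc | hc
  · simp only [hc, zero_mul, add_zero]
    simp_rw [← smul_eq_mul]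
    rw [integral_smul, integral_id_gaussian]
    simp
  · rw [integral_gaussianReal_eq, nd_abs _ _ hc]
    have hmeas : ∀ s : Set ℝ, MeasurableSet s →
        IntegrableOn (fun t => Real.sign (b + c * t) * t * stdNormalPDF t) s := by
      intro s hs
      refine (Integrable.mono' integrable_mul_pdf.abs ?_ ?_).integrableOn
      · exact ((measurable_sign.comp (measurable_const.add
          (measurable_const.mul measurable_id))).mul measurable_id |>.mul
          (measurable_const.mul ((measurable_id.pow_const 2).neg.div_const 2).exp)
          ).aestronglyMeasurable
      · refine Filter.Eventually.of_forall fun t => ?_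
        rw [Real.norm_eq_abs, abs_mul, abs_mul]
        have h1 : |Real.sign (b + c * t)| ≤ 1 := abs_sign_le _
        have h2 : (0:ℝ) ≤ |stdNormalPDF t| := abs_nonneg _
        calc |Real.sign (b + c * t)| * |t| * |stdNormalPDF t|
            ≤ 1 * |t| * |stdNormalPDF t| := by
              apply mul_le_mul_of_nonneg_right (mul_le_mul_of_nonneg_right h1 (abs_nonneg _)) h2
          _ = |t * stdNormalPDF t| := by rw [one_mul, abs_mul]
    set t₀ := -b / c with ht₀
    have key : ∀ t, b + c * t = c * (t - t₀) := by
      intro t; rw [ht₀]; field_simp; ring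
    rw [← intervalIntegral.integral_Iic_add_Ioi (b := t₀)
      (hmeas _ measurableSet_Iic) (hmeas _ measurableSet_Ioi)]
    rcases lt_or_gt_of_ne hc with hneg | hpos
    · -- c < 0
      have hIoi : ∫ t in Set.Ioi t₀, Real.sign (b + c * t) * t * stdNormalPDF t
          = ∫ t in Set.Ioi t₀, -(t * stdNormalPDF t) := by
        refine setIntegral_congr_fun measurableSet_Ioi fun t ht => ?_
        rw [key t, Real.sign_of_neg (mul_neg_of_neg_of_pos hneg (sub_pos.2 ht))]
        ring
      have hIic : ∫ t in Set.Iic t₀, Real.sign (b + c * t) * t * stdNormalPDF t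
          = ∫ t in Set.Iio t₀, Real.sign (b + c * t) * t * stdNormalPDF t := by
        rw [← restrict_Iio_eq_restrict_Iic]
      have hIio : ∫ t in Set.Iio t₀, Real.sign (b + c * t) * t * stdNormalPDF t
          = ∫ t in Set.Iio t₀, t * stdNormalPDF t := by
        refine setIntegral_congr_fun measurableSet_Iio fun t ht => ?_
        rw [key t, Real.sign_of_pos (mul_pos_of_neg_of_neg hneg (sub_neg.2 ht))]
        ring
      rw [hIoi, hIic, hIio, integral_neg, integral_Ioi_mul_pdf,
        restrict_Iio_eq_restrict_Iic, integral_Iic_mul_pdf]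
      have : |c| = -c := abs_of_neg hneg
      have he : stdNormalPDF t₀ = stdNormalPDF (b / c) := by
        rw [ht₀, neg_div, stdNormalPDF_even]
      rw [he, this]
      rw [div_neg, mul_neg, mul_assoc, ← mul_div_assoc, mul_div_cancel_left₀ _ hc]
      ring
    · -- c > 0
      have hIoi : ∫ t in Set.Ioi t₀, Real.sign (b + c * t) * t * stdNormalPDF t
          = ∫ t in Set.Ioi t₀, t * stdNormalPDF t := by
        refine setIntegral_congr_fun measurableSet_Ioi fun t ht => ?_
        rw [key t, Real.sign_of_pos (mul_pos hpos (sub_pos.2 ht))]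
        ring
      have hIic : ∫ t in Set.Iic t₀, Real.sign (b + c * t) * t * stdNormalPDF t
          = ∫ t in Set.Iio t₀, -(t * stdNormalPDF t) := by
        rw [← restrict_Iio_eq_restrict_Iic]
        refine setIntegral_congr_fun measurableSet_Iio fun t ht => ?_
        rw [key t, Real.sign_of_neg (mul_neg_of_pos_of_neg hpos (sub_neg.2 ht))]
        ring
      rw [hIoi, hIic, integral_neg, restrict_Iio_eq_restrict_Iic,
        integral_Iic_mul_pdf, integral_Ioi_mul_pdf]
      have : |c| = c := abs_of_pos hpos
      have he : stdNormalPDF t₀ = stdNormalPDF (b / c) := by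
        rw [ht₀, neg_div, stdNormalPDF_even]
      rw [he, this]
      field_simp
      ring


lemma conv (v : ℝ) (hv : 0 < v) (c b : ℝ) :
    ∫ t, nd v (b + c * t) ∂(gaussianReal 0 1) = nd (v + c ^ 2) b := by
  rcases eq_or_ne c 0 with hc | hc
  · simp only [hc, zero_mul, add_zero]
    rw [integral_const]
    simp [ne_eq, OfNat.ofNat_ne_zero, not_false_eq_true, zero_pow]
  · set w := v + c ^ 2 with hw
    have hw0 : 0 < w := by positivity
    have hc2 : (0:ℝ) < c ^ 2 := by positivity
    rw [integral_gaussianReal_eq]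
    have key : ∀ t, nd v (b + c * t) * stdNormalPDF t
        = ((Real.sqrt (2*π*v))⁻¹ * (Real.sqrt (2*π))⁻¹ * Real.exp (-b^2/(2*w)))
          * Real.exp (-(w/(2*v)) * (t + c*b/w)^2) := by
      intro t
      rw [nd, stdNormalPDF, mul_mul_mul_comm, ← Real.exp_add, mul_assoc (_ * _), ← Real.exp_add]
      congr 1
      have hvne : v ≠ 0 := hv.ne'
      have hwne : w ≠ 0 := hw0.ne'
      congr 1
      rw [hw]
      field_simp
      ring
    simp_rw [key]
    rw [integral_const_mul]
    have htrans : ∫ t : ℝ, Real.exp (-(w/(2*v)) * (t + c*b/w)^2)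
        = Real.sqrt (π / (w/(2*v))) := by
      rw [integral_add_right_eq_self (fun t => Real.exp (-(w/(2*v)) * t^2)) (c*b/w)]
      exact integral_gaussian _
    rw [htrans, nd]
    have hπ : (0:ℝ) < π := Real.pi_pos
    have h1 : Real.sqrt (π / (w/(2*v))) = Real.sqrt (2*π*v) / Real.sqrt w := by
      rw [← Real.sqrt_div' _ (by positivity)]
      · congr 1
        field_simp
    rw [h1]
    have h2 : Real.sqrt (2*π*w) = Real.sqrt (2*π) * Real.sqrt w := by
      rw [← Real.sqrt_mul (by positivity)]
    rw [h2, mul_inv]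
    have hs1 : Real.sqrt (2*π*v) ≠ 0 := by positivity
    have hs2 : Real.sqrt w ≠ 0 := by positivity
    field_simp


noncomputable def γ : Measure ℝ := gaussianReal 0 1
noncomputable def Pn (n : ℕ) : Measure (Fin n → ℝ) := Measure.pi fun _ => γ
instance : IsProbabilityMeasure γ := by unfold γ; infer_instance
instance (n : ℕ) : IsProbabilityMeasure (Pn n) := by unfold Pn; infer_instance

lemma integral_id_gaussian' : ∫ t, t ∂γ = 0 := integral_id_gaussian
lemma integral_sign_mul' (b c : ℝ) :
    ∫ t, Real.sign (b + c * t) * t ∂γ = 2 * c * nd (c ^ 2) b := integral_sign_mul b c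
lemma conv' (v : ℝ) (hv : 0 < v) (c b : ℝ) :
    ∫ t, nd v (b + c * t) ∂γ = nd (v + c ^ 2) b := conv v hv c b

lemma nd_nonneg (v b : ℝ) : 0 ≤ nd v b := by unfold nd; positivity

lemma nd_le (v b : ℝ) (hv : 0 < v) : nd v b ≤ (Real.sqrt (2 * Real.pi * v))⁻¹ := by
  unfold nd
  have h1 : Real.exp (-b ^ 2 / (2 * v)) ≤ 1 := by
    rw [← Real.exp_zero]
    apply Real.exp_le_exp.2
    have : (0:ℝ) ≤ b ^ 2 / (2 * v) := by positivity
    rw [neg_div]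
    linarith
  calc (Real.sqrt (2 * Real.pi * v))⁻¹ * Real.exp (-b ^ 2 / (2 * v))
      ≤ (Real.sqrt (2 * Real.pi * v))⁻¹ * 1 := mul_le_mul_of_nonneg_left h1 (by positivity)
    _ = _ := mul_one _

lemma continuous_nd (v : ℝ) : Continuous (nd v) := by
  unfold nd
  refine continuous_const.mul ?_
  exact (((continuous_pow 2).neg).div_const _).rexp

lemma integrable_of_bounded {α : Type*} [MeasurableSpace α] {μ : Measure α}
    [IsFiniteMeasure μ] {f : α → ℝ} (hm : AEStronglyMeasurable f μ) (C : ℝ)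
    (h : ∀ x, |f x| ≤ C) : Integrable f μ :=
  Integrable.mono' (integrable_const C) hm (Filter.Eventually.of_forall fun x => h x)

lemma pi_conv (n : ℕ) (c : Fin n → ℝ) (v : ℝ) (hv : 0 < v) (b : ℝ) :
    ∫ y, nd v (b + ∑ m, c m * y m) ∂(Pn n) = nd (v + ∑ m, (c m) ^ 2) b := by
  induction n generalizing b v with
  | zero =>
    simp only [Finset.univ_eq_empty, Finset.sum_empty, add_zero]
    rw [integral_const]
    simp
  | succ n ih =>
    set e := MeasurableEquiv.piFinSuccAbove (fun _ : Fin (n+1) => ℝ) 0 with he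
    have mp : MeasurePreserving e (Pn (n+1)) (γ.prod (Pn n)) := by
      have := measurePreserving_piFinSuccAbove (fun _ : Fin (n+1) => γ) 0
      exact this
    set g : ℝ × (Fin n → ℝ) → ℝ :=
      fun p => nd v ((b + c 0 * p.1) + ∑ m, c (Fin.succAbove 0 m) * p.2 m) with hg
    have hcomp : ∀ x : Fin (n+1) → ℝ, g (e x) = nd v (b + ∑ m, c m * x m) := by
      intro x
      simp only [hg, he, MeasurableEquiv.piFinSuccAbove]
      rw [Fin.sum_univ_succAbove (fun m => c m * x m) 0]
      simp [Fin.removeNth, Fin.tail]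
      ring_nf
    have hmeas_g : Measurable g := by
      refine (continuous_nd v).measurable.comp ?_
      refine Measurable.add (measurable_const.add (measurable_const.mul measurable_fst)) ?_
      exact Finset.measurable_sum _ fun m _ =>
        measurable_const.mul ((measurable_pi_apply m).comp measurable_snd)
    have hint_g : Integrable g (γ.prod (Pn n)) := by
      refine integrable_of_bounded hmeas_g.aestronglyMeasurable
        (Real.sqrt (2 * Real.pi * v))⁻¹ fun p => ?_
      rw [abs_of_nonneg (nd_nonneg _ _)]
      exact nd_le _ _ hv
    calc ∫ y, nd v (b + ∑ m, c m * y m) ∂(Pn (n+1))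
        = ∫ y, g (e y) ∂(Pn (n+1)) := by
          refine integral_congr_ae (Filter.Eventually.of_forall fun y => ?_)
          exact (hcomp y).symm
      _ = ∫ p, g p ∂(γ.prod (Pn n)) := mp.integral_comp e.measurableEmbedding g
      _ = ∫ t, ∫ z, g (t, z) ∂(Pn n) ∂γ := integral_prod g hint_g
      _ = ∫ t, nd (v + ∑ m, c (Fin.succAbove 0 m) ^ 2) ((b + c 0 * t)) ∂γ := by
          refine integral_congr_ae (Filter.Eventually.of_forall fun t => ?_)
          exact ih (fun m => c (Fin.succAbove 0 m)) v hv (b + c 0 * t)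
      _ = nd (v + ∑ m, c (Fin.succAbove 0 m) ^ 2 + c 0 ^ 2) b := by
          exact conv' _ (by positivity) (c 0) b
      _ = nd (v + ∑ m, (c m) ^ 2) b := by
          rw [Fin.sum_univ_succAbove (fun m => c m ^ 2) 0]
          ring_nf


lemma integrable_id_gaussian : Integrable (fun t : ℝ => t) γ := by
  unfold γ
  rw [gaussianReal_of_var_ne_zero 0 one_ne_zero]
  rw [gaussianPDF_def]
  rw [show (fun x => ENNReal.ofReal (gaussianPDFReal 0 1 x))
      = (fun x => ((Real.toNNReal (gaussianPDFReal 0 1 x) : ℝ≥0) : ℝ≥0∞)) from rfl]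
  rw [integrable_withDensity_iff_integrable_smul
    ((measurable_gaussianPDFReal 0 1).real_toNNReal)]
  have : (fun x : ℝ => (Real.toNNReal (gaussianPDFReal 0 1 x) : ℝ≥0) • x)
      = fun x : ℝ => x * ((Real.sqrt (2*π))⁻¹ * Real.exp (-(1/2) * x ^ 2)) := by
    funext x
    rw [NNReal.smul_def, smul_eq_mul,
      Real.coe_toNNReal _ (gaussianPDFReal_nonneg 0 1 x), gaussianPDFReal]
    push_cast
    ring_nf
  rw [this]
  have h := (integrable_mul_exp_neg_mul_sq (b := (1:ℝ)/2) (by norm_num)).mul_const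
    (Real.sqrt (2*π))⁻¹
  exact h.congr (Filter.Eventually.of_forall fun x => by ring)

/-- fst is integrable on a product of probability measures. -/
lemma integrable_fst_prod {β : Type*} [MeasurableSpace β] (ν : Measure β)
    [IsProbabilityMeasure ν] : Integrable (fun p : ℝ × β => p.1) (γ.prod ν) := by
  have h := Integrable.mul_prod (integrable_id_gaussian) (integrable_const (1:ℝ)) (ν := ν)
  simpa using h

/-- Key multi-dim integral. -/
lemma integral_sign_mul_eval (n : ℕ) (c : Fin n → ℝ) (b : ℝ) (k : Fin n) :
    ∫ y, Real.sign (b + ∑ m, c m * y m) * y k ∂(Pn n)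
      = 2 * c k * nd (∑ m, (c m) ^ 2) b := by
  obtain ⟨n, rfl⟩ : ∃ m, n = m + 1 :=
    ⟨n - 1, (Nat.succ_pred_eq_of_pos (Nat.pos_of_ne_zero (by rintro rfl; exact k.elim0))).symm⟩
  set e := MeasurableEquiv.piFinSuccAbove (fun _ : Fin (n+1) => ℝ) k with he
  have mp : MeasurePreserving e (Pn (n+1)) (γ.prod (Pn n)) :=
    measurePreserving_piFinSuccAbove (fun _ : Fin (n+1) => γ) k
  set g : ℝ × (Fin n → ℝ) → ℝ :=
    fun p => Real.sign ((b + ∑ m, c (Fin.succAbove k m) * p.2 m) + c k * p.1) * p.1 with hg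
  have hcomp : ∀ x : Fin (n+1) → ℝ,
      g (e x) = Real.sign (b + ∑ m, c m * x m) * x k := by
    intro x
    have hex : e x = (x k, fun m => x (k.succAbove m)) := rfl
    rw [hex, hg]
    simp only
    rw [Fin.sum_univ_succAbove (fun m => c m * x m) k]
    congr 2
    ring
  have hmeas_g : Measurable g := by
    refine Measurable.mul ?_ measurable_fst
    refine measurable_sign.comp ?_
    refine Measurable.add ?_ (measurable_const.mul measurable_fst)
    exact measurable_const.add (Finset.measurable_sum _ fun m _ =>
      measurable_const.mul ((measurable_pi_apply m).comp measurable_snd))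
  have hint_g : Integrable g (γ.prod (Pn n)) := by
    refine Integrable.mono' (integrable_fst_prod (Pn n)).abs hmeas_g.aestronglyMeasurable
      (Filter.Eventually.of_forall fun p => ?_)
    rw [Real.norm_eq_abs, hg]
    simp only
    rw [abs_mul]
    calc |Real.sign _| * |p.1| ≤ 1 * |p.1| :=
          mul_le_mul_of_nonneg_right (abs_sign_le _) (abs_nonneg _)
      _ = |p.1| := one_mul _
  calc ∫ y, Real.sign (b + ∑ m, c m * y m) * y k ∂(Pn (n+1))
      = ∫ y, g (e y) ∂(Pn (n+1)) := by
        refine integral_congr_ae (Filter.Eventually.of_forall fun y => ?_)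
        exact (hcomp y).symm
    _ = ∫ p, g p ∂(γ.prod (Pn n)) := mp.integral_comp e.measurableEmbedding g
    _ = ∫ z, ∫ t, g (t, z) ∂γ ∂(Pn n) := integral_prod_symm g hint_g
    _ = ∫ z, 2 * c k * nd ((c k) ^ 2) (b + ∑ m, c (Fin.succAbove k m) * z m) ∂(Pn n) := by
        refine integral_congr_ae (Filter.Eventually.of_forall fun z => ?_)
        exact integral_sign_mul' (b + ∑ m, c (Fin.succAbove k m) * z m) (c k)
    _ = 2 * c k * nd (∑ m, (c m) ^ 2) b := by
        rcases eq_or_ne (c k) 0 with hck | hck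
        · simp [hck]
        · rw [integral_const_mul]
          rw [pi_conv n (fun m => c (Fin.succAbove k m)) ((c k) ^ 2) (by positivity) b]
          rw [Fin.sum_univ_succAbove (fun m => c m ^ 2) k]


lemma integrable_eval (n : ℕ) (k : Fin n) : Integrable (fun x => x k) (Pn n) := by
  obtain ⟨n, rfl⟩ : ∃ m, n = m + 1 :=
    ⟨n - 1, (Nat.succ_pred_eq_of_pos (Nat.pos_of_ne_zero (by rintro rfl; exact k.elim0))).symm⟩
  set e := MeasurableEquiv.piFinSuccAbove (fun _ : Fin (n+1) => ℝ) k with he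
  have mp : MeasurePreserving e (Pn (n+1)) (γ.prod (Pn n)) :=
    measurePreserving_piFinSuccAbove (fun _ : Fin (n+1) => γ) k
  have : (fun x : Fin (n+1) → ℝ => x k) = (fun p : ℝ × (Fin n → ℝ) => p.1) ∘ e := rfl
  rw [this]
  exact (mp.integrable_comp_emb e.measurableEmbedding).2 (integrable_fst_prod (Pn n))

lemma integral_eval (n : ℕ) (k : Fin n) : ∫ x, x k ∂(Pn n) = 0 := by
  obtain ⟨n, rfl⟩ : ∃ m, n = m + 1 :=
    ⟨n - 1, (Nat.succ_pred_eq_of_pos (Nat.pos_of_ne_zero (by rintro rfl; exact k.elim0))).symm⟩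
  set e := MeasurableEquiv.piFinSuccAbove (fun _ : Fin (n+1) => ℝ) k with he
  have mp : MeasurePreserving e (Pn (n+1)) (γ.prod (Pn n)) :=
    measurePreserving_piFinSuccAbove (fun _ : Fin (n+1) => γ) k
  have h1 : ∫ x, x k ∂(Pn (n+1)) = ∫ p : ℝ × (Fin n → ℝ), p.1 ∂(γ.prod (Pn n)) := by
    have := mp.integral_comp e.measurableEmbedding (fun p : ℝ × (Fin n → ℝ) => p.1)
    exact this
  rw [h1, integral_prod _ (integrable_fst_prod (Pn n))]
  simp [integral_id_gaussian']

end SteinAux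

open SteinAux

/-- Linear covariance formula (Stein's lemma for binary quantization).
A `D`-dimensional Gaussian vector `Z ~ N(μ, Σ)` is realized as `Z i = μ i + (A x) i`
where `x` has `D` independent standard Gaussian coordinates and `Σ = A Aᵀ`.
With `S = ∑ᵢ sign(Zᵢ)`, `T = ∑ⱼ dⱼ Zⱼ`, `σᵢ = √Σᵢᵢ > 0` and
`aᵢ = 2φ(μᵢ/σᵢ)/σᵢ`, we have `Cov(S, T) = ∑ᵢⱼ aᵢ Σᵢⱼ dⱼ`. -/
theorem stmt_3 (D : ℕ) (μ d : Fin D → ℝ) (Sig A : Matrix (Fin D) (Fin D) ℝ)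
    (hfact : ∀ i j, Sig i j = ∑ k, A i k * A j k)
    (hvar : ∀ i, 0 < Sig i i) :
    let P := Measure.pi (fun _ : Fin D => gaussianReal 0 1)
    let Z : Fin D → (Fin D → ℝ) → ℝ := fun i x => μ i + ∑ k, A i k * x k
    let S : (Fin D → ℝ) → ℝ := fun x => ∑ i, Real.sign (Z i x)
    let T : (Fin D → ℝ) → ℝ := fun x => ∑ j, d j * Z j x
    let σ : Fin D → ℝ := fun i => Real.sqrt (Sig i i)
    let a : Fin D → ℝ := fun i => 2 * stdNormalPDF (μ i / σ i) / σ i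
    (∫ x, S x * T x ∂P) - (∫ x, S x ∂P) * (∫ x, T x ∂P) =
      ∑ i, ∑ j, a i * Sig i j * d j := by
  intro P Z S T σ a
  have hPeq : P = Pn D := rfl
  rw [hPeq]
  -- basic measurability
  have hZmeas : ∀ i, Measurable (Z i) := fun i =>
    measurable_const.add (Finset.measurable_sum _ fun k _ =>
      measurable_const.mul (measurable_pi_apply k))
  have hsgnmeas : ∀ i, Measurable (fun x => Real.sign (Z i x)) := fun i =>
    measurable_sign.comp (hZmeas i)
  -- integrability
  have hZint : ∀ j, Integrable (Z j) (Pn D) := by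
    intro j
    refine Integrable.add (integrable_const _) (integrable_finset_sum _ fun k _ => ?_)
    exact (integrable_eval D k).const_mul (A j k)
  have hsgnint : ∀ i, Integrable (fun x => Real.sign (Z i x)) (Pn D) :=
    fun i => integrable_of_bounded (hsgnmeas i).aestronglyMeasurable 1
      (fun x => abs_sign_le _)
  have hsxint : ∀ i k, Integrable (fun x => Real.sign (Z i x) * x k) (Pn D) := by
    intro i k
    refine Integrable.mono' (integrable_eval D k).abs
      ((hsgnmeas i).mul (measurable_pi_apply k)).aestronglyMeasurable
      (Filter.Eventually.of_forall fun x => ?_)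
    rw [Real.norm_eq_abs, abs_mul]
    calc |Real.sign (Z i x)| * |x k| ≤ 1 * |x k| :=
          mul_le_mul_of_nonneg_right (abs_sign_le _) (abs_nonneg _)
      _ = |x k| := one_mul _
  have hsZint : ∀ i j, Integrable (fun x => Real.sign (Z i x) * (d j * Z j x)) (Pn D) := by
    intro i j
    refine Integrable.mono' (((hZint j).const_mul (d j)).abs)
      ((hsgnmeas i).mul (measurable_const.mul (hZmeas j))).aestronglyMeasurable
      (Filter.Eventually.of_forall fun x => ?_)
    rw [Real.norm_eq_abs, abs_mul]
    calc |Real.sign (Z i x)| * |d j * Z j x| ≤ 1 * |d j * Z j x| :=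
          mul_le_mul_of_nonneg_right (abs_sign_le _) (abs_nonneg _)
      _ = |d j * Z j x| := one_mul _
  -- variances
  have hsum_sq : ∀ i, (∑ m, (A i m) ^ 2) = Sig i i := by
    intro i
    rw [hfact i i]
    exact Finset.sum_congr rfl fun m _ => (sq (A i m)).symm ▸ rfl
  -- key integral
  have key1 : ∀ i k, ∫ x, Real.sign (Z i x) * x k ∂(Pn D) = a i * A i k := by
    intro i k
    have h := integral_sign_mul_eval D (A i) (μ i) k
    rw [hsum_sq i] at h
    have hZeq : ∀ x : Fin D → ℝ, Z i x = μ i + ∑ m, A i m * x m := fun x => rfl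
    simp_rw [hZeq]
    rw [h, nd_eq (Sig i i) (hvar i) (μ i)]
    show 2 * A i k * (stdNormalPDF (μ i / σ i) / σ i)
        = 2 * stdNormalPDF (μ i / σ i) / σ i * A i k
    ring
  -- expectation of Z j
  have hEZ : ∀ j, ∫ x, Z j x ∂(Pn D) = μ j := by
    intro j
    show (∫ x, (μ j : ℝ) + ∑ k, A j k * x k ∂(Pn D)) = μ j
    rw [integral_add (integrable_const _) (integrable_finset_sum _ fun k _ =>
      (integrable_eval D k).const_mul (A j k)),
      integral_const, integral_finset_sum _ (fun k _ =>
      (integrable_eval D k).const_mul (A j k))]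
    simp_rw [integral_const_mul, integral_eval]
    simp
  have hET : ∫ x, T x ∂(Pn D) = ∑ j, d j * μ j := by
    show (∫ x, ∑ j, d j * Z j x ∂(Pn D)) = _
    rw [integral_finset_sum _ (fun j _ => (hZint j).const_mul (d j))]
    refine Finset.sum_congr rfl fun j _ => ?_
    rw [integral_const_mul, hEZ j]
  have hES : ∫ x, S x ∂(Pn D) = ∑ i, ∫ x, Real.sign (Z i x) ∂(Pn D) := by
    show (∫ x, ∑ i, Real.sign (Z i x) ∂(Pn D)) = _
    exact integral_finset_sum _ (fun i _ => hsgnint i)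
  have hterm : ∀ i j, ∫ x, Real.sign (Z i x) * (d j * Z j x) ∂(Pn D)
      = d j * μ j * (∫ x, Real.sign (Z i x) ∂(Pn D)) + a i * Sig i j * d j := by
    intro i j
    have hre : ∀ x, Real.sign (Z i x) * (d j * Z j x)
        = (d j * μ j) * Real.sign (Z i x)
          + ∑ k, (d j * A j k) * (Real.sign (Z i x) * x k) := by
      intro x
      have h2 : ∑ k, (d j * A j k) * (Real.sign (Z i x) * x k)
          = (d j * Real.sign (Z i x)) * ∑ k, A j k * x k := by
        rw [Finset.mul_sum]
        exact Finset.sum_congr rfl fun k _ => by ring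
      rw [h2, show Z j x = μ j + ∑ k, A j k * x k from rfl]
      ring
    calc ∫ x, Real.sign (Z i x) * (d j * Z j x) ∂(Pn D)
        = ∫ x, ((d j * μ j) * Real.sign (Z i x)
            + ∑ k, (d j * A j k) * (Real.sign (Z i x) * x k)) ∂(Pn D) :=
          integral_congr_ae (Filter.Eventually.of_forall fun x => hre x)
      _ = (d j * μ j) * (∫ x, Real.sign (Z i x) ∂(Pn D))
            + ∑ k, (d j * A j k) * (a i * A i k) := by
          rw [integral_add ((hsgnint i).const_mul _)
            (integrable_finset_sum _ fun k _ => (hsxint i k).const_mul _),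
            integral_const_mul,
            integral_finset_sum _ (fun k _ => (hsxint i k).const_mul _)]
          congr 1
          refine Finset.sum_congr rfl fun k _ => ?_
          rw [integral_const_mul, key1 i k]
      _ = d j * μ j * (∫ x, Real.sign (Z i x) ∂(Pn D)) + a i * Sig i j * d j := by
          congr 1
          rw [hfact i j, Finset.mul_sum, Finset.sum_mul]
          exact Finset.sum_congr rfl fun k _ => by ring
  have hEST : ∫ x, S x * T x ∂(Pn D)
      = ∑ i, ∑ j, (d j * μ j * (∫ x, Real.sign (Z i x) ∂(Pn D)) + a i * Sig i j * d j) := by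
    have hexp : ∀ x, S x * T x = ∑ i, ∑ j, Real.sign (Z i x) * (d j * Z j x) := by
      intro x
      rw [show S x = ∑ i, Real.sign (Z i x) from rfl,
        show T x = ∑ j, d j * Z j x from rfl, Finset.sum_mul_sum]
    rw [integral_congr_ae (Filter.Eventually.of_forall hexp)]
    rw [integral_finset_sum _ (fun i _ => integrable_finset_sum _ fun j _ => hsZint i j)]
    refine Finset.sum_congr rfl fun i _ => ?_
    rw [integral_finset_sum _ (fun j _ => hsZint i j)]
    exact Finset.sum_congr rfl fun j _ => hterm i j
  rw [hEST, hES, hET]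
  have hc : ∑ i, ∑ j, d j * μ j * (∫ x, Real.sign (Z i x) ∂(Pn D))
      = (∑ i, ∫ x, Real.sign (Z i x) ∂(Pn D)) * (∑ j, d j * μ j) := by
    rw [Finset.sum_mul_sum]
    exact Finset.sum_congr rfl fun i _ => Finset.sum_congr rfl fun j _ => by ring
  simp only [Finset.sum_add_distrib]
  rw [hc]
  ring
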